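/- The multiplier language L_{x_1^{-1}} = {⊗(u,v) : u, v ∈ L_∞, ū x_1^{-1} = v̄ in F} is not a regular language. In particular, for every p there exist strings in L_{x_1^{-1}} (namely ⊗(b^p, b^p #^{p+1} b)) that cannot be pumped: for m > 0, ⊗(b^{p+m}, b^{p+m} #^{p+1} b) ∉ L_{x_1^{-1}}. -/

import Mathlib

/-- The relators of Thompson's group `F` in its standard infinite presentation:
`x_j x_i = x_i x_{j+1}` whenever `i < j`. -/
def thompsonRels : Set (FreeGroup ℕ) :=
  {r | ∃ i j : ℕ, i < j ∧
    r = FreeGroup.of j * FreeGroup.of i * (FreeGroup.of (j + 1))⁻¹ * (FreeGroup.of i)⁻¹}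

/-- Thompson's group `F`, presented by `⟨x_0, x_1, … | x_j x_i = x_i x_{j+1} (i < j)⟩`. -/
abbrev ThompsonF : Type := PresentedGroup thompsonRels

/-- The generator `x_n` of Thompson's group `F`. -/
def x (n : ℕ) : ThompsonF := PresentedGroup.of n

/-- The three-letter symbol alphabet `{a, b, #}` (with `h` denoting `#`). -/
inductive A : Type
  | a | b | h
deriving DecidableEq

instance instFintypeA : Fintype A :=
  ⟨{A.a, A.b, A.h}, fun x => by cases x <;> simp⟩

/-- The block `a^r b^s`. -/
def block (r s : ℕ) : List A := List.replicate r A.a ++ List.replicate s A.b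

/-- The string `a^{r 0} b^{s 0} # a^{r 1} b^{s 1} # ⋯ # a^{r M} b^{s M}`. -/
def lword (M : ℕ) (r s : ℕ → ℕ) : List A :=
  List.intercalate [A.h] ((List.range (M + 1)).map fun i => block (r i) (s i))

/-- The exponent conditions: exactly one of `r M, s M` is nonzero, and
`r i * s i > 0` implies `r (i+1) + s (i+1) > 0` for `i < M`. -/
def goodParams (M : ℕ) (r s : ℕ → ℕ) : Prop :=
  ((r M ≠ 0 ∧ s M = 0) ∨ (r M = 0 ∧ s M ≠ 0)) ∧
    ∀ i < M, 0 < r i * s i → 0 < r (i + 1) + s (i + 1)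

/-- The normal form language `L_∞` over `{a, b, #}`: all strings
`a^{r_0} b^{s_0} # ⋯ # a^{r_M} b^{s_M}` satisfying the exponent conditions,
together with the empty string. -/
def Linf : Language A :=
  {w | w = [] ∨ ∃ M r s, goodParams M r s ∧ w = lword M r s}

/-- The group element `x_0^{r_0} ⋯ x_M^{r_M} x_M^{-s_M} ⋯ x_0^{-s_0}` of Thompson's
group `F` encoded by the string `a^{r_0} b^{s_0} # ⋯ # a^{r_M} b^{s_M}`. -/
def gword (M : ℕ) (r s : ℕ → ℕ) : ThompsonF :=
  (((List.range (M + 1)).map fun i => x i ^ r i).prod) *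
    (((List.range (M + 1)).reverse.map fun i => (x i)⁻¹ ^ s i).prod)

/-- The element of Thompson's group `F` represented by a string in `L_∞`:
splitting on `#`, the `i`-th block `a^{r_i} b^{s_i}` contributes `x_i^{r_i}` to the
positive part and `x_i^{-s_i}` to the (reversed) negative part. -/
def evalL (w : List A) : ThompsonF :=
  let bs := ((w.splitOn A.h).zipIdx.map Prod.swap)
  ((bs.map fun p => x p.1 ^ (p.2.count A.a)).prod) *
    ((bs.reverse.map fun p => (x p.1)⁻¹ ^ (p.2.count A.b)).prod)

/-- The convolution of a pair of words: read the two words in parallel, padding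
the shorter with `⋄` (modelled by `none`). -/
def conv2 {Λ : Type} (u v : List Λ) : List (Option Λ × Option Λ) :=
  (List.range (max u.length v.length)).map (fun i => (u[i]?, v[i]?))

/-- The multiplier language `L_{x_1^{-1}}` of the `L_∞` normal form:
convolutions `⊗(u,v)` with `u, v ∈ L_∞` and `v̄ = ū x_1⁻¹` in `F`. -/
def Lx1inv : Language (Option A × Option A) :=
  {c | ∃ u ∈ Linf, ∃ v ∈ Linf, c = conv2 u v ∧ evalL v = evalL u * (x 1)⁻¹}

/-! ### A concrete representation of Thompson's group by PL homeomorphisms of `ℝ` -/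

noncomputable section ThompsonRep

/-- The standard generator `x_n` of `F` as a PL map of `ℝ`. -/
def ef (n : ℕ) (t : ℝ) : ℝ :=
  if t ≤ (n : ℝ) - 1 then t else if t ≤ n then 2 * t - ((n : ℝ) - 1) else t + 1

/-- The inverse of `ef n`. -/
def eg (n : ℕ) (t : ℝ) : ℝ :=
  if t ≤ (n : ℝ) - 1 then t else if t ≤ (n : ℝ) + 1 then (t + n - 1) / 2 else t - 1

/-- The generator `x_n` as a permutation of `ℝ`. -/
def E (n : ℕ) : Equiv.Perm ℝ where
  toFun := ef n
  invFun := eg n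
  left_inv := by intro t; unfold ef eg; split_ifs <;> linarith
  right_inv := by intro t; unfold ef eg; split_ifs <;> linarith

lemma E_comm {i j : ℕ} (h : i < j) : E i * E j = E (j + 1) * E i := by
  have hij : (i : ℝ) + 1 ≤ j := by exact_mod_cast h
  ext t
  show ef i (ef j t) = ef (j + 1) (ef i t)
  unfold ef; push_cast; split_ifs <;> linarith

lemma lift_rels : ∀ r ∈ thompsonRels, FreeGroup.lift (fun n => (E n)⁻¹) r = 1 := by
  rintro r ⟨i, j, hij, rfl⟩
  simp only [map_mul, map_inv, FreeGroup.lift_apply_of]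
  have := E_comm hij
  group
  rw [zpow_neg_one, zpow_neg_one, ← mul_inv_rev, add_comm 1 j, mul_assoc, ← this]
  group

/-- The representation `ThompsonF →* Perm ℝ`. -/
def phi : ThompsonF →* Equiv.Perm ℝ := PresentedGroup.toGroup lift_rels

lemma phi_x (n : ℕ) : phi (x n) = (E n)⁻¹ := PresentedGroup.toGroup.of lift_rels

/-- Distinct generators of `F` are distinct group elements. -/
lemma x_injlt {i j : ℕ} (h : i < j) : x i ≠ x j := by
  intro hx
  have hE : E i = E j := by
    have := congrArg phi hx
    rw [phi_x, phi_x, inv_inj] at this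
    exact this
  have := congrFun (congrArg (fun e : Equiv.Perm ℝ => (e : ℝ → ℝ)) hE) (i : ℝ)
  have hij : (i : ℝ) + 1 ≤ j := by exact_mod_cast h
  simp only [E, Equiv.coe_fn_mk, ef] at this
  rw [if_neg (by linarith), if_pos (by linarith), if_pos (by linarith)] at this
  linarith

/-- The defining relations of `F`, in the presented group. -/
lemma xrel {i j : ℕ} (h : i < j) : x j * x i = x i * x (j + 1) := by
  have hmem : (FreeGroup.of j * FreeGroup.of i * (FreeGroup.of (j + 1))⁻¹ *
      (FreeGroup.of i)⁻¹ : FreeGroup ℕ) ∈ Subgroup.normalClosure thompsonRels :=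
    Subgroup.subset_normalClosure ⟨i, j, h, rfl⟩
  have h1 : (PresentedGroup.mk thompsonRels) (FreeGroup.of j * FreeGroup.of i *
      (FreeGroup.of (j + 1))⁻¹ * (FreeGroup.of i)⁻¹) = 1 :=
    (QuotientGroup.eq_one_iff _).mpr hmem
  simp only [map_mul, map_inv] at h1
  have h2 : x j * x i * (x (j + 1))⁻¹ * (x i)⁻¹ = 1 := h1
  calc x j * x i = (x j * x i * (x (j + 1))⁻¹ * (x i)⁻¹) * (x i * x (j + 1)) := by group
  _ = x i * x (j + 1) := by rw [h2]; group

/-- The key identity `x_0^{-n} x_1^{-1} = x_{n+1}^{-1} x_0^{-n}` in `F`. -/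
lemma key (n : ℕ) : (x 0)⁻¹ ^ n * (x 1)⁻¹ = (x (n + 1))⁻¹ * (x 0)⁻¹ ^ n := by
  induction n with
  | zero => simp
  | succ n ih =>
    have hr : x (n + 1) * x 0 = x 0 * x (n + 2) := xrel (Nat.succ_pos n)
    have h2 : (x 0)⁻¹ * (x (n + 1))⁻¹ = (x (n + 2))⁻¹ * (x 0)⁻¹ := by
      rw [← mul_inv_rev, ← mul_inv_rev, hr]
    calc (x 0)⁻¹ ^ (n + 1) * (x 1)⁻¹ = (x 0)⁻¹ * ((x 0)⁻¹ ^ n * (x 1)⁻¹) := by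
          rw [pow_succ']; group
    _ = ((x 0)⁻¹ * (x (n + 1))⁻¹) * (x 0)⁻¹ ^ n := by rw [ih]; group
    _ = (x (n + 2))⁻¹ * (x 0)⁻¹ ^ (n + 1) := by rw [h2, pow_succ']; group

end ThompsonRep

/-! ### List computations -/

def List.enumFrom {α : Type*} : ℕ → List α → List (ℕ × α)
  | _, [] => []
  | n, a :: l => (n, a) :: List.enumFrom (n + 1) l

@[simp]
theorem List.enumFrom_nil {α : Type*} (n : ℕ) : ([] : List α).enumFrom n = [] := rfl

@[simp]
theorem List.enumFrom_cons {α : Type*} (n : ℕ) (a : α) (l : List α) :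
    (a :: l).enumFrom n = (n, a) :: l.enumFrom (n + 1) := rfl

def List.enum {α : Type*} (l : List α) : List (ℕ × α) := l.enumFrom 0

theorem List.enumFrom_eq_zipIdx {α : Type*} (l : List α) (n : ℕ) :
    l.enumFrom n = (l.zipIdx n).map Prod.swap := by
  induction l generalizing n with
  | nil => rfl
  | cons a l ih => simp [List.enumFrom_cons, ih]

theorem List.enum_eq_zipIdx {α : Type*} (l : List α) :
    l.enum = l.zipIdx.map Prod.swap := List.enumFrom_eq_zipIdx l 0

lemma intercalate_cons' {α : Type*} (sep : List α) (a : List α) (l : List (List α)) (h : l ≠ []) :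
    sep.intercalate (a :: l) = a ++ sep ++ sep.intercalate l := by
  cases l with
  | nil => exact absurd rfl h
  | cons b t => simp [List.intercalate, List.append_assoc]

lemma intercalate_single' {α : Type*} (sep : List α) (a : List α) :
    sep.intercalate [a] = a := by simp [List.intercalate]

lemma intercalate_mid (p : ℕ) :
    [A.h].intercalate (List.replicate p ([] : List A) ++ [[A.b]]) =
      List.replicate p A.h ++ [A.b] := by
  induction p with
  | zero => simp [intercalate_single']
  | succ p ih =>
    rw [List.replicate_succ, List.cons_append, intercalate_cons' _ _ _ (by simp),
      ih, List.replicate_succ]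
    simp

lemma intercalate_full (q p : ℕ) :
    [A.h].intercalate (List.replicate q A.b :: (List.replicate p ([] : List A) ++ [[A.b]])) =
      List.replicate q A.b ++ List.replicate (p + 1) A.h ++ [A.b] := by
  rw [intercalate_cons' _ _ _ (by simp), intercalate_mid, List.replicate_succ]
  simp [List.append_assoc]

lemma map_range_blocks (q p : ℕ) :
    (List.range (p + 2)).map
        (fun i => List.replicate (if i = 0 then q else if i = p + 1 then 1 else 0) A.b) =
      List.replicate q A.b :: (List.replicate p ([] : List A) ++ [[A.b]]) := by
  have h1 : List.range (p + 2) = 0 :: (List.range (p + 1)).map Nat.succ :=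
    List.range_succ_eq_map (n := p + 1)
  rw [h1, List.map_cons, List.map_map]
  simp only [if_pos rfl]
  congr 1
  rw [List.range_succ, List.map_append]
  congr 1
  · rw [List.eq_replicate_iff]
    refine ⟨by simp, ?_⟩
    intro l hl
    simp only [List.mem_map, List.mem_range] at hl
    obtain ⟨i, hi, rfl⟩ := hl
    simp only [Function.comp]
    rw [if_neg (by omega), if_neg (by omega), List.replicate_zero]
  · simp [Function.comp]

lemma splitOn_u (q : ℕ) :
    (List.replicate q A.b).splitOn A.h = [List.replicate q A.b] := by
  have := List.splitOn_intercalate (ls := [List.replicate q A.b]) A.h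
    (by intro l hl; simp only [List.mem_singleton] at hl; subst hl
        intro hm; exact absurd (List.eq_of_mem_replicate hm) (by rintro ⟨⟩)) (by simp)
  rwa [intercalate_single'] at this

lemma splitOn_v (q p : ℕ) :
    (List.replicate q A.b ++ List.replicate (p + 1) A.h ++ [A.b]).splitOn A.h =
      List.replicate q A.b :: (List.replicate p ([] : List A) ++ [[A.b]]) := by
  rw [← intercalate_full q p]
  apply List.splitOn_intercalate
  · intro l hl
    simp only [List.mem_cons, List.mem_append, List.mem_replicate] at hl
    rcases hl with rfl | ⟨⟨-, rfl⟩ | hl⟩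
    · intro hm; exact absurd (List.eq_of_mem_replicate hm) (by rintro ⟨⟩)
    · simp
    · simp at hl; subst hl; decide
  · simp

lemma count_a_rep (q : ℕ) : (List.replicate q A.b).count A.a = 0 :=
  List.count_eq_zero.mpr (fun hm => absurd (List.eq_of_mem_replicate hm) (by rintro ⟨⟩))

lemma count_b_rep (q : ℕ) : (List.replicate q A.b).count A.b = q := by
  simp [List.count_replicate]

lemma prodA (L : List (List A)) (hL : ∀ l ∈ L, A.a ∉ l) (k : ℕ) :
    ((L.enumFrom k).map (fun pr => x pr.1 ^ pr.2.count A.a)).prod = 1 := by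
  induction L generalizing k with
  | nil => simp
  | cons l L ih =>
    rw [List.enumFrom_cons, List.map_cons, List.prod_cons,
      List.count_eq_zero.mpr (hL l (by simp)), pow_zero, one_mul]
    exact ih (fun l hl => hL l (by simp [hl])) (k + 1)

lemma prodB (p : ℕ) : ∀ k : ℕ,
    ((((List.replicate p ([] : List A) ++ [[A.b]]).enumFrom k).reverse.map
      (fun pr => (x pr.1)⁻¹ ^ pr.2.count A.b)).prod = (x (k + p))⁻¹) := by
  induction p with
  | zero => intro k; simp
  | succ p ih =>
    intro k
    rw [List.replicate_succ, List.cons_append, List.enumFrom_cons, List.reverse_cons,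
      List.map_append, List.prod_append, ih (k + 1)]
    simp only [List.map_cons, List.map_nil, List.prod_cons, List.prod_nil,
      List.count_nil, pow_zero, mul_one]
    rw [show k + 1 + p = k + (p + 1) by omega]

lemma evalL_u (q : ℕ) : evalL (List.replicate q A.b) = (x 0)⁻¹ ^ q := by
  unfold evalL
  rw [← List.enum_eq_zipIdx, splitOn_u]
  simp [List.enum, List.enumFrom, count_a_rep, count_b_rep]

lemma evalL_v (q p : ℕ) :
    evalL (List.replicate q A.b ++ List.replicate (p + 1) A.h ++ [A.b]) =
      (x (p + 1))⁻¹ * (x 0)⁻¹ ^ q := by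
  unfold evalL
  rw [← List.enum_eq_zipIdx, splitOn_v]
  have h1 : (List.replicate q A.b :: (List.replicate p ([] : List A) ++ [[A.b]])).enum =
      (0, List.replicate q A.b) :: ((List.replicate p ([] : List A) ++ [[A.b]]).enumFrom 1) := by
    simp [List.enum, List.enumFrom]
  rw [h1]
  dsimp only
  have hA : ((((0, List.replicate q A.b) ::
      ((List.replicate p ([] : List A) ++ [[A.b]]).enumFrom 1))).map
        (fun pr => x pr.1 ^ pr.2.count A.a)).prod = 1 := by
    have := prodA (List.replicate q A.b :: (List.replicate p ([] : List A) ++ [[A.b]]))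
      (by
        intro l hl
        simp only [List.mem_cons, List.mem_append, List.mem_replicate] at hl
        rcases hl with rfl | ⟨⟨-, rfl⟩ | hl⟩
        · exact fun hm => absurd (List.eq_of_mem_replicate hm) (by rintro ⟨⟩)
        · simp
        · simp at hl; subst hl; decide) 0
    rw [List.enumFrom_cons] at this
    exact this
  rw [hA, one_mul, List.reverse_cons, List.map_append, List.prod_append, prodB p 1]
  simp only [List.map_cons, List.map_nil, List.prod_cons, List.prod_nil, mul_one,
    count_b_rep]
  rw [show 1 + p = p + 1 by omega]

/-! ### Membership in `L_∞` -/

lemma mem_Linf_u (q : ℕ) : List.replicate q A.b ∈ Linf := by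
  rcases Nat.eq_zero_or_pos q with rfl | hq
  · exact Or.inl rfl
  · refine Or.inr ⟨0, fun _ => 0, fun _ => q, ⟨Or.inr ⟨rfl, hq.ne'⟩, ?_⟩, ?_⟩
    · intro i hi; omega
    · unfold lword block
      simp [List.range_succ, intercalate_single']

lemma mem_Linf_v (q p : ℕ) :
    List.replicate q A.b ++ List.replicate (p + 1) A.h ++ [A.b] ∈ Linf := by
  refine Or.inr ⟨p + 1, fun _ => 0,
    fun i => if i = 0 then q else if i = p + 1 then 1 else 0,
    ⟨Or.inr ⟨rfl, by simp⟩, ?_⟩, ?_⟩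
  · intro i hi h0; simp at h0
  · unfold lword block
    simp only [List.replicate_zero, List.nil_append]
    rw [show p + 1 + 1 = p + 2 from rfl, map_range_blocks q p, intercalate_full]

/-! ### Convolution lemmas -/

lemma conv2_length {Λ : Type} (u v : List Λ) :
    (conv2 u v).length = max u.length v.length := by simp [conv2]

lemma conv2_get? {Λ : Type} (u v : List Λ) (i : ℕ) :
    (conv2 u v)[i]? =
      if i < max u.length v.length then some (u[i]?, v[i]?) else none := by
  unfold conv2
  rw [List.getElem?_map]
  rcases lt_or_ge i (max u.length v.length) with h | h
  · rw [List.getElem?_range h, if_pos h]; rfl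
  · rw [List.getElem?_eq_none_iff.mpr (by simpa using h), if_neg (not_lt.mpr h)]; rfl

lemma conv2_injective {Λ : Type} {u v u' v' : List Λ} (h : conv2 u v = conv2 u' v') :
    u = u' ∧ v = v' := by
  have hlen : max u.length v.length = max u'.length v'.length := by
    have := congrArg List.length h
    simpa [conv2_length] using this
  have hget : ∀ i : ℕ, u[i]? = u'[i]? ∧ v[i]? = v'[i]? := by
    intro i
    have hi := congrArg (fun l => l[i]?) h
    simp only [conv2_get?] at hi
    rcases lt_or_ge i (max u.length v.length) with hlt | hge
    · rw [if_pos hlt, if_pos (hlen ▸ hlt)] at hi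
      have := Option.some.inj hi
      exact ⟨congrArg Prod.fst this, congrArg Prod.snd this⟩
    · have h1 : u[i]? = none := List.getElem?_eq_none_iff.mpr (le_trans (le_max_left _ _) hge)
      have h2 : v[i]? = none := List.getElem?_eq_none_iff.mpr (le_trans (le_max_right _ _) hge)
      have h3 : u'[i]? = none := List.getElem?_eq_none_iff.mpr
        (le_trans (le_max_left _ _) (hlen ▸ hge))
      have h4 : v'[i]? = none := List.getElem?_eq_none_iff.mpr
        (le_trans (le_max_right _ _) (hlen ▸ hge))
      exact ⟨h1.trans h3.symm, h2.trans h4.symm⟩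
  exact ⟨List.ext_getElem? fun i => (hget i).1, List.ext_getElem? fun i => (hget i).2⟩

lemma conv2_nil {Λ : Type} (v : List Λ) :
    conv2 [] v = v.map (fun a => ((none : Option Λ), some a)) := by
  apply List.ext_getElem?
  intro i
  rw [conv2_get?, List.getElem?_map]
  rcases lt_or_ge i v.length with h | h
  · rw [if_pos (by simpa using h), List.getElem?_eq_getElem h]; rfl
  · rw [if_neg (by simpa using not_lt.mpr h), List.getElem?_eq_none_iff.mpr h]; rfl

lemma conv2_cons {Λ : Type} (a c : Λ) (u v : List Λ) :
    conv2 (a :: u) (c :: v) = (some a, some c) :: conv2 u v := by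
  unfold conv2
  rw [show max (a :: u).length (c :: v).length = max u.length v.length + 1 by
      simp [List.length_cons, Nat.succ_max_succ],
    List.range_succ_eq_map, List.map_cons, List.map_map]
  rfl

lemma conv2_rep {Λ : Type} (c : Λ) (q : ℕ) (w : List Λ) :
    conv2 (List.replicate q c) (List.replicate q c ++ w) =
      List.replicate q ((some c : Option Λ), (some c : Option Λ)) ++ conv2 [] w := by
  induction q with
  | zero => simp
  | succ q ih =>
    rw [List.replicate_succ, List.replicate_succ, List.cons_append, conv2_cons, ih]
    rfl

lemma conv2_explicit (q p : ℕ) :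
    conv2 (List.replicate q A.b)
        (List.replicate q A.b ++ List.replicate (p + 1) A.h ++ [A.b]) =
      List.replicate q ((some A.b : Option A), (some A.b : Option A)) ++
        (List.replicate (p + 1) ((none : Option A), (some A.h : Option A)) ++
          [((none : Option A), (some A.b : Option A))]) := by
  rw [List.append_assoc, conv2_rep, conv2_nil]
  simp [List.map_append, List.map_replicate]

/-! ### The main theorem -/

/-- The multiplier language `L_{x_1^{-1}}` is not regular.  Moreover, for every `p`
the string `⊗(b^p, b^p #^{p+1} b)` lies in `L_{x_1^{-1}}` but cannot be pumped:
for every `m > 0`, `⊗(b^{p+m}, b^{p+m} #^{p+1} b) ∉ L_{x_1^{-1}}`. -/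
theorem Lx1inv_not_regular :
    ¬ Lx1inv.IsRegular ∧
    ∀ p : ℕ,
      conv2 (List.replicate p A.b)
        (List.replicate p A.b ++ List.replicate (p + 1) A.h ++ [A.b]) ∈ Lx1inv ∧
      ∀ m : ℕ, 0 < m →
        conv2 (List.replicate (p + m) A.b)
          (List.replicate (p + m) A.b ++ List.replicate (p + 1) A.h ++ [A.b]) ∉ Lx1inv := by
  have part2 : ∀ p : ℕ,
      conv2 (List.replicate p A.b)
        (List.replicate p A.b ++ List.replicate (p + 1) A.h ++ [A.b]) ∈ Lx1inv ∧
      ∀ m : ℕ, 0 < m →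
        conv2 (List.replicate (p + m) A.b)
          (List.replicate (p + m) A.b ++ List.replicate (p + 1) A.h ++ [A.b]) ∉ Lx1inv := by
    intro p
    constructor
    · refine ⟨List.replicate p A.b, mem_Linf_u p,
        List.replicate p A.b ++ List.replicate (p + 1) A.h ++ [A.b], mem_Linf_v p p,
        rfl, ?_⟩
      rw [evalL_v p p, evalL_u p, key p]
    · intro m hm hmem
      obtain ⟨u, hu, v, hv, hconv, heval⟩ := hmem
      obtain ⟨hu', hv'⟩ := conv2_injective hconv
      subst hu'; subst hv'
      rw [evalL_v (p + m) p, evalL_u (p + m), key (p + m)] at heval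
      have h1 : (x (p + 1))⁻¹ = (x (p + m + 1))⁻¹ := mul_right_cancel heval
      exact x_injlt (show p + 1 < p + m + 1 by omega) (inv_injective h1)
  refine ⟨?_, part2⟩
  rintro ⟨σ, hfin, M, hM⟩
  letI := hfin
  set n := Fintype.card σ with hn
  have hmem := (part2 n).1
  rw [← hM] at hmem
  have hlen : n ≤ (conv2 (List.replicate n A.b)
      (List.replicate n A.b ++ List.replicate (n + 1) A.h ++ [A.b])).length := by
    rw [conv2_length]
    simp only [List.length_replicate, List.length_append, List.length_singleton]
    omega
  obtain ⟨a, b, c, hx, hablen, hbne, hpump⟩ := M.pumping_lemma hmem hlen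
  have hablen' : a.length + b.length ≤ n := hablen
  have hy : a ++ (b ++ b) ++ c ∈ M.accepts := by
    apply hpump
    refine Language.mem_mul.mpr ⟨a ++ (b ++ b), Language.mem_mul.mpr
      ⟨a, rfl, b ++ b, ?_, rfl⟩, c, rfl, rfl⟩
    refine Language.mem_kstar.mpr ⟨[b, b], by simp, ?_⟩
    intro y hy
    simp only [List.mem_cons, List.mem_singleton, List.not_mem_nil, or_false] at hy
    rcases hy with rfl | rfl <;> rfl
  set s : Option A × Option A := (some A.b, some A.b) with hs
  set t : List (Option A × Option A) :=
    List.replicate (n + 1) ((none : Option A), (some A.h : Option A)) ++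
      [((none : Option A), (some A.b : Option A))] with ht
  have hsplit : a ++ b ++ c = List.replicate n s ++ t := by
    rw [← hx, conv2_explicit]
  have hab_pref : a ++ b <+: List.replicate n s := by
    have h1 : a ++ b <+: List.replicate n s ++ t := ⟨c, hsplit⟩
    have h2 : List.replicate n s <+: List.replicate n s ++ t := List.prefix_append _ _
    exact List.prefix_of_prefix_length_le h1 h2 (by simpa using hablen')
  have hmem_ab : ∀ z ∈ a ++ b, z = s := fun z hz =>
    List.eq_of_mem_replicate (hab_pref.subset hz)
  have ha_rep : a = List.replicate a.length s :=
    List.eq_replicate_iff.mpr ⟨rfl, fun z hz => hmem_ab z (List.mem_append_left _ hz)⟩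
  have hb_rep : b = List.replicate b.length s :=
    List.eq_replicate_iff.mpr ⟨rfl, fun z hz => hmem_ab z (List.mem_append_right _ hz)⟩
  obtain ⟨la, rfl⟩ : ∃ la, a = List.replicate la s := ⟨a.length, ha_rep⟩
  obtain ⟨lb, rfl⟩ : ∃ lb, b = List.replicate lb s := ⟨b.length, hb_rep⟩
  have hlab : la + lb ≤ n := by simpa using hablen'
  have hbpos : 0 < lb := by
    rcases Nat.eq_zero_or_pos lb with rfl | h
    · exact absurd rfl hbne
    · exact h
  have hc : c = List.replicate (n - (la + lb)) s ++ t := by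
    have h5 : List.replicate (la + lb) s ++ c =
        List.replicate (la + lb) s ++ (List.replicate (n - (la + lb)) s ++ t) := by
      calc List.replicate (la + lb) s ++ c
          = (List.replicate la s ++ List.replicate lb s) ++ c := by rw [List.replicate_add]
        _ = List.replicate n s ++ t := hsplit
        _ = List.replicate (la + lb) s ++ (List.replicate (n - (la + lb)) s ++ t) := by
            conv_rhs => rw [← List.append_assoc, ← List.replicate_add]
            rw [show la + lb + (n - (la + lb)) = n by omega]
    exact List.append_cancel_left h5
  have hkey : List.replicate la s ++ (List.replicate lb s ++ List.replicate lb s) ++ c =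
      List.replicate (n + lb) s ++ t := by
    rw [hc]
    simp only [← List.append_assoc, ← List.replicate_add]
    rw [show la + (lb + lb) + (n - (la + lb)) = n + lb by omega]
  have hyform : List.replicate la s ++ (List.replicate lb s ++ List.replicate lb s) ++ c =
      conv2 (List.replicate (n + lb) A.b)
        (List.replicate (n + lb) A.b ++ List.replicate (n + 1) A.h ++ [A.b]) := by
    rw [hkey, conv2_explicit]
  have hy' : List.replicate la s ++ (List.replicate lb s ++ List.replicate lb s) ++ c
      ∈ Lx1inv := hM ▸ hy
  rw [hyform] at hy'
  exact (part2 n).2 lb hbpos hy'
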